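/- Let $h \in \mathbb{R}$ and let $(x, \xi) : I \to \mathbb{R}^2$ be a differentiable solution on an interval $I$ of Hamilton's equations for $p_0$: $\dot{x} = x\xi$, $\dot{\xi} = -\tfrac{3}{2}x^2 - \tfrac{1}{2}\xi^2 + \tfrac{3}{2}h$, and suppose $x(t) \ne 0$ for all $t \in I$. Fix $t_* \in I$ and set $C_0 = \tfrac{1}{2} x(t_*)\big(x(t_*)^2 + \xi(t_*)^2\big) - \tfrac{3}{2} h\, x(t_*)$. Then the function $w = 1/x$ satisfies the differential equation $\big(\dot{w}(t)\big)^2 = 2 C_0\, w(t)^3 + 3h\, w(t)^2 - 1$ for all $t \in I$. -/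

import Mathlib

/-- Along a nonvanishing solution of Hamilton's equations for
`p₀(x,ξ;h) = ½x(x²+ξ²) - (3/2)hx` on an interval, the function `w = 1/x` satisfies
the Weierstrass-type differential equation `(ẇ)² = 2C₀w³ + 3hw² - 1`, where
`C₀` is the (conserved) value of `p₀` along the solution. -/
theorem reciprocal_satisfies_weierstrass_ode
    (h : ℝ) (I : Set ℝ) (hI : Convex ℝ I)
    (x ξ : ℝ → ℝ)
    (hx : ∀ t ∈ I, HasDerivWithinAt x (x t * ξ t) I t)
    (hξ : ∀ t ∈ I, HasDerivWithinAt ξ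
      (-(3 / 2) * (x t) ^ 2 - (1 / 2) * (ξ t) ^ 2 + (3 / 2) * h) I t)
    (hx0 : ∀ t ∈ I, x t ≠ 0)
    (tstar : ℝ) (htstar : tstar ∈ I)
    (C₀ : ℝ)
    (hC₀ : C₀ = (1 / 2) * x tstar * ((x tstar) ^ 2 + (ξ tstar) ^ 2) - (3 / 2) * h * x tstar) :
    ∀ t ∈ I, ∃ w' : ℝ,
      HasDerivWithinAt (fun s => (x s)⁻¹) w' I t ∧
      w' ^ 2 = 2 * C₀ * ((x t)⁻¹) ^ 3 + 3 * h * ((x t)⁻¹) ^ 2 - 1 := by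
  -- energy function
  set E : ℝ → ℝ := fun s => (1 / 2) * x s * ((x s) ^ 2 + (ξ s) ^ 2) - (3 / 2) * h * x s
    with hE
  have hE' : ∀ t ∈ I, HasDerivWithinAt E 0 I t := by
    intro t ht
    have hxt := hx t ht
    have hξt := hξ t ht
    have : HasDerivWithinAt E
        ((1 / 2) * (x t * ξ t) * ((x t) ^ 2 + (ξ t) ^ 2)
          + (1 / 2) * x t * (2 * x t * (x t * ξ t)
            + 2 * ξ t * (-(3 / 2) * (x t) ^ 2 - (1 / 2) * (ξ t) ^ 2 + (3 / 2) * h))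
          - (3 / 2) * h * (x t * ξ t)) I t := by
      apply HasDerivWithinAt.sub
      · exact ((hasDerivWithinAt_const _ _ _).mul hxt).mul
          ((hxt.pow 2).add (hξt.pow 2)) |>.congr_deriv (by simp only [Pi.add_apply, Pi.pow_apply, Pi.mul_apply]; ring)
      · exact ((hasDerivWithinAt_const _ _ _).mul hxt).congr_deriv (by ring)
    convert this using 1
    ring
  have hcons : ∀ t ∈ I, E t = C₀ := by
    intro t ht
    have := hI.norm_image_sub_le_of_norm_hasFDerivWithin_le
      (f := E) (f' := fun t => ContinuousLinearMap.smulRight (1 : ℝ →L[ℝ] ℝ) 0)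
      (fun s hs => (hE' s hs).hasFDerivWithinAt) (C := 0)
      (fun s hs => by simp) htstar ht
    simp only [zero_mul, norm_le_zero_iff, sub_eq_zero] at this
    rw [this, hC₀]
  intro t ht
  have hxt := hx t ht
  have hx0t := hx0 t ht
  refine ⟨-(x t * ξ t) / (x t) ^ 2, hxt.inv hx0t, ?_⟩
  have hEt := hcons t ht
  simp only [hE] at hEt
  field_simp
  linear_combination 2 * hEt
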